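/- (Joint elicitability of mean and variance.) Let f : ℝ² → ℝ be a strictly convex function with subgradient selection ∇f, and let b((a, c), (u, v)) = −f(a, c) − ⟨∇f(a, c), (u − a, v − c)⟩ denote the associated strictly consistent Bregman function on ℝ². Define a scoring function on ℝ × [0, ∞) by S((m, σ²), y) = b((m, σ² + m²), (y, y²)). Then for every real random variable Y with E[Y²] < ∞, mean μ = E[Y] and variance v = Var(Y): E[S((m, σ²), Y)] ≥ E[S((μ, v), Y)] for all (m, σ²) ∈ ℝ × [0, ∞), with equality if and only if (m, σ²) = (μ, v). Hence, although the variance alone is not elicitable, the pair (mean, variance) is elicitable, with strictly consistent scoring functions obtained from Bregman functions for (E Y, E Y²) via the revelation principle applied to the bijection (m, s) ↦ (m, s − m²). -/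

import Mathlib

open MeasureTheory

/-- **Joint elicitability of mean and variance.** For a strictly convex
`f : ℝ² → ℝ` with subgradient selection `∇f` and associated Bregman function
`b`, the scoring function `S((m, σ²), y) = b((m, σ² + m²), (y, y²))` is
strictly consistent for the pair (mean, variance): its expected score is
uniquely minimized over `ℝ × [0, ∞)` at `(E Y, Var Y)`. -/
theorem mean_variance_jointly_elicitable
    (f : ℝ × ℝ → ℝ) (gradf : ℝ × ℝ → ℝ × ℝ)
    (hconv : StrictConvexOn ℝ Set.univ f)
    (hsubgrad : ∀ a z : ℝ × ℝ,
      f a + (gradf a).1 * (z.1 - a.1) + (gradf a).2 * (z.2 - a.2) ≤ f z)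
    (b : ℝ × ℝ → ℝ × ℝ → ℝ)
    (hb : ∀ a z, b a z =
      -f a - ((gradf a).1 * (z.1 - a.1) + (gradf a).2 * (z.2 - a.2)))
    (S : ℝ × ℝ → ℝ → ℝ)
    (hS : ∀ (p : ℝ × ℝ) (y : ℝ), S p y = b (p.1, p.2 + p.1 ^ 2) (y, y ^ 2))
    {Ω : Type*} [MeasurableSpace Ω] (μ : Measure Ω) [IsProbabilityMeasure μ]
    (Y : Ω → ℝ) (hYmeas : Measurable Y)
    (hY2int : Integrable (fun ω => (Y ω) ^ 2) μ)
    (m₀ v : ℝ) (hm₀ : m₀ = ∫ ω, Y ω ∂μ)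
    (hv : v = (∫ ω, (Y ω) ^ 2 ∂μ) - m₀ ^ 2) :
    ∀ (m σ2 : ℝ), 0 ≤ σ2 →
      (∫ ω, S (m₀, v) (Y ω) ∂μ ≤ ∫ ω, S (m, σ2) (Y ω) ∂μ) ∧
      (∫ ω, S (m, σ2) (Y ω) ∂μ = ∫ ω, S (m₀, v) (Y ω) ∂μ ↔
        (m, σ2) = (m₀, v)) := by
  -- integrability of Y
  have hYint : Integrable Y μ := by
    have hmono : ∀ ω, ‖Y ω‖ ≤ (1 + (Y ω) ^ 2) / 2 := by
      intro ω
      rw [Real.norm_eq_abs]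
      nlinarith [sq_nonneg (|Y ω| - 1), sq_abs (Y ω)]
    exact Integrable.mono' (((integrable_const (1:ℝ)).add hY2int).div_const 2)
      hYmeas.aestronglyMeasurable (Filter.Eventually.of_forall hmono)
  set I1 : ℝ := ∫ ω, Y ω ∂μ with hI1
  set I2 : ℝ := ∫ ω, (Y ω) ^ 2 ∂μ with hI2
  -- expected score formula
  have key : ∀ a : ℝ × ℝ, ∫ ω, b a (Y ω, (Y ω) ^ 2) ∂μ =
      -f a - ((gradf a).1 * (I1 - a.1) + (gradf a).2 * (I2 - a.2)) := by
    intro a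
    have h1 : Integrable (fun ω => (gradf a).1 * (Y ω - a.1)) μ :=
      ((hYint.sub (integrable_const _)).const_mul _)
    have h2 : Integrable (fun ω => (gradf a).2 * ((Y ω) ^ 2 - a.2)) μ :=
      ((hY2int.sub (integrable_const _)).const_mul _)
    have h12 : Integrable (fun ω => (gradf a).1 * (Y ω - a.1) +
        (gradf a).2 * ((Y ω) ^ 2 - a.2)) μ := h1.add h2
    have h3 : ∫ ω, b a (Y ω, (Y ω) ^ 2) ∂μ =
        ∫ ω, (-f a - ((gradf a).1 * (Y ω - a.1) + (gradf a).2 * ((Y ω) ^ 2 - a.2))) ∂μ := by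
      congr 1; ext ω; rw [hb]
    rw [h3, integral_sub (integrable_const _) h12, integral_const,
      integral_add h1 h2, integral_const_mul, integral_const_mul,
      integral_sub hYint (integrable_const _), integral_sub hY2int (integrable_const _),
      integral_const, integral_const]
    simp [measure_univ, hI1, hI2]
  -- the target point
  subst hm₀
  set zb : ℝ × ℝ := (I1, I2) with hzb
  have hGzb : ∀ a : ℝ × ℝ, a = zb →
      -f a - ((gradf a).1 * (I1 - a.1) + (gradf a).2 * (I2 - a.2)) = -f zb := by
    intro a ha; subst ha; simp [hzb]
  -- main inequality with strictness
  have main : ∀ a : ℝ × ℝ,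
      -f zb ≤ -f a - ((gradf a).1 * (I1 - a.1) + (gradf a).2 * (I2 - a.2)) ∧
      (-f a - ((gradf a).1 * (I1 - a.1) + (gradf a).2 * (I2 - a.2)) = -f zb → a = zb) := by
    intro a
    have hsub := hsubgrad a zb
    constructor
    · linarith
    · intro heq
      by_contra hne
      -- midpoint argument
      have hstrict := hconv.2 (Set.mem_univ a) (Set.mem_univ zb) hne
        (by norm_num : (0:ℝ) < 1/2) (by norm_num : (0:ℝ) < 1/2) (by norm_num)
      set w : ℝ × ℝ := (1/2 : ℝ) • a + (1/2 : ℝ) • zb with hw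
      have hw1 : w.1 = (a.1 + zb.1) / 2 := by simp [hw]; ring
      have hw2 : w.2 = (a.2 + zb.2) / 2 := by simp [hw]; ring
      have hsubw := hsubgrad a w
      rw [hw1, hw2] at hsubw
      -- f zb = f a + ⟨g, zb - a⟩
      have hfz : f zb = f a + ((gradf a).1 * (zb.1 - a.1) + (gradf a).2 * (zb.2 - a.2)) := by
        have h2 : (gradf a).1 * (I1 - a.1) + (gradf a).2 * (I2 - a.2) = f zb - f a := by
          linarith
        have : zb.1 = I1 ∧ zb.2 = I2 := ⟨rfl, rfl⟩
        rw [this.1, this.2]; linarith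
      have : f a + ((gradf a).1 * (zb.1 - a.1) + (gradf a).2 * (zb.2 - a.2)) / 2 ≤ f w := by
        have : (a.1 + zb.1) / 2 - a.1 = (zb.1 - a.1) / 2 := by ring
        nlinarith [hsubw]
      have hlt : f w < (1/2 : ℝ) * f a + (1/2 : ℝ) * f zb := hstrict
      linarith
  intro m σ2 _
  have hEm : ∫ ω, S (m, σ2) (Y ω) ∂μ =
      -f (m, σ2 + m ^ 2) - ((gradf (m, σ2 + m ^ 2)).1 * (I1 - m) +
        (gradf (m, σ2 + m ^ 2)).2 * (I2 - (σ2 + m ^ 2))) := by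
    have : ∫ ω, S (m, σ2) (Y ω) ∂μ = ∫ ω, b (m, σ2 + m ^ 2) (Y ω, (Y ω) ^ 2) ∂μ := by
      congr 1; ext ω; rw [hS]
    rw [this, key]
  have hvz : v + I1 ^ 2 = I2 := by rw [hv]; ring
  have hE0 : ∫ ω, S (I1, v) (Y ω) ∂μ = -f zb := by
    have heq0 : ∫ ω, S (I1, v) (Y ω) ∂μ = ∫ ω, b (I1, v + I1 ^ 2) (Y ω, (Y ω) ^ 2) ∂μ := by
      congr 1; ext ω; rw [hS]
    rw [heq0, key]
    have hpt : ((I1, v + I1 ^ 2) : ℝ × ℝ) = zb := by rw [hzb, hvz]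
    simpa using hGzb _ hpt
  have hmain := main (m, σ2 + m ^ 2)
  constructor
  · rw [hE0, hEm]; exact hmain.1
  · rw [hE0, hEm]
    constructor
    · intro heq
      have hz := hmain.2 heq
      have h1' : m = I1 := congrArg Prod.fst hz
      have h2' : σ2 + m ^ 2 = I2 := congrArg Prod.snd hz
      have h3' : σ2 = v := by rw [hv, ← h2', h1']; ring
      rw [Prod.mk.injEq]
      exact ⟨h1', h3'⟩
    · intro heq
      rw [Prod.mk.injEq] at heq
      have hpt : ((m, σ2 + m ^ 2) : ℝ × ℝ) = zb := by
        rw [heq.1, heq.2, hzb, hvz]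
      simpa using hGzb _ hpt
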